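/- arXiv:2501.02194 — 2 statements merged into one kernel-verified Lean document; each statement's English description precedes it below -/
import Mathlib

section
/- The expected score gain function is not submodular: there exist a finite set V, a score function s : V → ℝ, sets A ⊆ B ⊆ V, and an element u ∈ V \ B such that ESG(A ∪ {u}) − ESG(A) < ESG(B ∪ {u}) − ESG(B), where ESG(C) = |C|^{-τ} (∑_{v∈C} s_v − (∑_{u∈V} s_u / |V|)·|C|) with τ = 0.9. -/
open Finset

/-- Expected score gain of a subset `C` of `Fin n` with scores `s` and granularity `τ`. -/
noncomputable def ESG {n : ℕ} (s : Fin n → ℝ) (τ : ℝ) (C : Finset (Fin n)) : ℝ :=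
  (1 / (C.card : ℝ) ^ τ) * ((∑ v ∈ C, s v) - ((∑ u, s u) / (n : ℝ)) * C.card)

theorem ESG_not_submodular :
    ∃ (n : ℕ) (s : Fin n → ℝ) (A B : Finset (Fin n)) (u : Fin n),
      A ⊆ B ∧ u ∉ B ∧
      ESG s 0.9 (insert u A) - ESG s 0.9 A < ESG s 0.9 (insert u B) - ESG s 0.9 B := by
  refine ⟨4, ![-2,-2,-2,0], {3}, {0,3}, 1, by decide, by decide, ?_⟩
  have e1 : (insert (1:Fin 4) {3} : Finset (Fin 4)) = {1,3} := by decide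
  have e2 : (insert (1:Fin 4) {0,3} : Finset (Fin 4)) = {0,1,3} := by decide
  rw [e1, e2]
  have c1 : (({1,3} : Finset (Fin 4)).card : ℝ) = 2 := by
    rw [show ({1,3} : Finset (Fin 4)).card = 2 from by decide]; norm_num
  have c2 : (({0,1,3} : Finset (Fin 4)).card : ℝ) = 3 := by
    rw [show ({0,1,3} : Finset (Fin 4)).card = 3 from by decide]; norm_num
  have c3 : (({0,3} : Finset (Fin 4)).card : ℝ) = 2 := by
    rw [show ({0,3} : Finset (Fin 4)).card = 2 from by decide]; norm_num
  have s1 : (∑ v ∈ ({1,3} : Finset (Fin 4)), ![(-2:ℝ),-2,-2,0] v) = -2 := by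
    rw [Finset.sum_insert (by decide), Finset.sum_singleton]; norm_num [Matrix.cons_val_three]
  have s2 : (∑ v ∈ ({0,1,3} : Finset (Fin 4)), ![(-2:ℝ),-2,-2,0] v) = -4 := by
    rw [Finset.sum_insert (by decide), Finset.sum_insert (by decide),
      Finset.sum_singleton]; norm_num [Matrix.cons_val_three]
  have s3 : (∑ v ∈ ({0,3} : Finset (Fin 4)), ![(-2:ℝ),-2,-2,0] v) = -2 := by
    rw [Finset.sum_insert (by decide), Finset.sum_singleton]; norm_num [Matrix.cons_val_three]
  simp only [ESG, Fin.sum_univ_four]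
  norm_num [c1, c2, c3, s1, s2, s3, Matrix.cons_val_two, Matrix.cons_val_three]
  -- goal: (2^(9/10))⁻¹ - 3/2 < (3^(9/10))⁻¹ * (1/2) - (2^(9/10))⁻¹
  have h2 : (1.4:ℝ) ≤ (2:ℝ) ^ ((9:ℝ)/10) := by
    calc (1.4:ℝ) ≤ Real.sqrt 2 := by
          rw [show (1.4:ℝ) = Real.sqrt (1.4^2) from (Real.sqrt_sq (by norm_num)).symm]
          exact Real.sqrt_le_sqrt (by norm_num)
      _ = (2:ℝ) ^ ((1:ℝ)/2) := by rw [Real.sqrt_eq_rpow]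
      _ ≤ (2:ℝ) ^ ((9:ℝ)/10) :=
          Real.rpow_le_rpow_of_exponent_le (by norm_num) (by norm_num)
  have h2pos : (0:ℝ) < (2:ℝ) ^ ((9:ℝ)/10) := Real.rpow_pos_of_pos (by norm_num) _
  have h3pos : (0:ℝ) < (3:ℝ) ^ ((9:ℝ)/10) := Real.rpow_pos_of_pos (by norm_num) _
  have hinv : ((2:ℝ) ^ ((9:ℝ)/10))⁻¹ ≤ 1/1.4 := by
    rw [inv_le_comm₀ h2pos (by norm_num)] at *
    · exact le_trans (by norm_num) h2
  have hinv3 : (0:ℝ) < ((3:ℝ) ^ ((9:ℝ)/10))⁻¹ := by positivity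
  nlinarith
end

section
/- With V = {x, y, u}, scores s_x = 1.0, s_y = 0.5, s_u = 0.1, τ = 0.9, A = {x}, B = {x, y}, the marginal gain of adding u to A is strictly less than the marginal gain of adding u to B, i.e., ESG(A ∪ {u}) − ESG(A) < ESG(B ∪ {u}) − ESG(B). -/
open Finset
theorem ESG_counterexample :
    let s : Fin 3 → ℝ := ![1.0, 0.5, 0.1]
    let A : Finset (Fin 3) := {0}
    let B : Finset (Fin 3) := {0, 1}
    let u : Fin 3 := 2
    ESG s 0.9 (insert u A) - ESG s 0.9 A < ESG s 0.9 (insert u B) - ESG s 0.9 B := by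
  intro s A B u
  have h1 : (1:ℝ) < (2:ℝ) ^ ((9:ℝ)/10) := by
    rw [show (1:ℝ) = (2:ℝ)^(0:ℝ) by simp]
    exact Real.rpow_lt_rpow_left_iff (by norm_num) |>.2 (by norm_num)
  have h0 : (0:ℝ) < (2:ℝ) ^ ((9:ℝ)/10) := by positivity
  have hinv : ((2:ℝ) ^ ((9:ℝ)/10))⁻¹ < 1 := by
    rw [inv_lt_one_iff₀]; right; exact h1
  simp only [ESG, s, A, B, u, Fin.sum_univ_three]
  norm_num [Finset.sum_insert, show ({2,0}:Finset (Fin 3)).card = 2 from rfl,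
    show ({2,0,1}:Finset (Fin 3)).card = 3 from rfl, Finset.sum_pair,
    show ((2:Fin 3) ≠ 0) from by decide,
    show ({2,0,1}:Finset (Fin 3)) = Finset.univ from by decide, Fin.sum_univ_three]
  simp only [Matrix.cons_val] at *
  nlinarith [inv_pos.2 h0]
end
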